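/- Let h₁, h₂ ∈ ℝ^ν be nonzero vectors and Ĥ a matrix with rows in ℝ^ν such that there exists v ∈ ker Ĥ ∩ ker h₁ᵀ ∩ ker h₂ᵀ with v ≫ 0, h₁ and h₂ are not scalar multiples of each other, and the cones {r : Ĥr ≥ 0, h₁ᵀr ≥ 0, h₂ᵀr ≥ 0} and {r : Ĥr ≥ 0, −h₁ᵀr ≥ 0, −h₂ᵀr ≥ 0} both have nonempty interior. Then at least one of the cones {r : Ĥr ≥ 0, h₁ᵀr ≥ 0, −h₂ᵀr ≥ 0} or {r : Ĥr ≥ 0, −h₁ᵀr ≥ 0, h₂ᵀr ≥ 0} has nonempty interior. -/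

import Mathlib

set_option maxHeartbeats 1000000

lemma ncb_sum_comb {ν : ℕ} (u x y : Fin ν → ℝ) (s t : ℝ) :
    ∑ j, u j * (s * x j + t * y j) = s * ∑ j, u j * x j + t * ∑ j, u j * y j := by
  rw [Finset.mul_sum, Finset.mul_sum, ← Finset.sum_add_distrib]
  exact Finset.sum_congr rfl fun j _ => by ring

lemma ncb_lin_cont {ν : ℕ} (u : Fin ν → ℝ) :
    Continuous (fun r : Fin ν → ℝ => ∑ j, u j * r j) :=
  continuous_finset_sum _ fun j _ => continuous_const.mul (continuous_apply j)

lemma ncb_sumsq_pos {ν : ℕ} (u : Fin ν → ℝ) (hu : u ≠ 0) :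
    0 < ∑ j, u j * u j := by
  obtain ⟨j, hj⟩ := Function.ne_iff.1 hu
  exact Finset.sum_pos' (fun k _ => mul_self_nonneg _)
    ⟨j, Finset.mem_univ j, mul_self_pos.2 hj⟩

lemma ncb_strict_of_interior {ν : ℕ} (u x : Fin ν → ℝ) (hu : u ≠ 0)
    (hx : x ∈ interior {r : Fin ν → ℝ | 0 ≤ ∑ j, u j * r j}) :
    0 < ∑ j, u j * x j := by
  obtain ⟨ε, hε, hball⟩ := Metric.mem_nhds_iff.mp (mem_interior_iff_mem_nhds.mp hx)
  have hun : 0 < ‖u‖ := norm_pos_iff.2 hu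
  set t : ℝ := ε / (2 * ‖u‖) with ht
  have htpos : 0 < t := div_pos hε (by positivity)
  have hy : x - t • u ∈ Metric.ball x ε := by
    rw [Metric.mem_ball, dist_eq_norm]
    have h1 : x - t • u - x = -(t • u) := by abel
    have h2 : t * ‖u‖ = ε / 2 := by rw [ht]; field_simp
    rw [h1, norm_neg, norm_smul, Real.norm_eq_abs, abs_of_pos htpos, h2]
    linarith
  have hmem : 0 ≤ ∑ j, u j * (x - t • u) j := hball hy
  have hcomp : ∑ j, u j * (x - t • u) j = ∑ j, u j * x j - t * ∑ j, u j * u j := by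
    rw [Finset.mul_sum, ← Finset.sum_sub_distrib]
    exact Finset.sum_congr rfl fun j _ => by simp [Pi.sub_apply, Pi.smul_apply]; ring
  have := ncb_sumsq_pos u hu
  nlinarith [hmem, hcomp]

lemma ncb_rows_open {m ν : ℕ} (Hhat : Matrix (Fin m) (Fin ν) ℝ) :
    IsOpen {r : Fin ν → ℝ | ∀ i, Hhat i = 0 ∨ 0 < Hhat.mulVec r i} := by
  have : {r : Fin ν → ℝ | ∀ i, Hhat i = 0 ∨ 0 < Hhat.mulVec r i}
      = ⋂ i, {r : Fin ν → ℝ | Hhat i = 0 ∨ 0 < Hhat.mulVec r i} := by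
    ext r; simp [Set.mem_iInter]
  rw [this]
  refine isOpen_iInter_of_finite fun i => ?_
  by_cases hi : Hhat i = 0
  · have : {r : Fin ν → ℝ | Hhat i = 0 ∨ 0 < Hhat.mulVec r i} = Set.univ := by
      ext r; simp [hi]
    rw [this]; exact isOpen_univ
  · have : {r : Fin ν → ℝ | Hhat i = 0 ∨ 0 < Hhat.mulVec r i}
        = {r : Fin ν → ℝ | 0 < ∑ j, Hhat i j * r j} := by
      ext r; simp [hi, Matrix.mulVec, dotProduct]
    rw [this]
    exact isOpen_lt continuous_const (ncb_lin_cont (Hhat i))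

lemma ncb_mem_interior {m ν : ℕ} (Hhat : Matrix (Fin m) (Fin ν) ℝ)
    (g₁ g₂ : Fin ν → ℝ) (x : Fin ν → ℝ)
    (hH : ∀ i, Hhat i = 0 ∨ 0 < Hhat.mulVec x i)
    (h1 : 0 < ∑ j, g₁ j * x j) (h2 : 0 < ∑ j, g₂ j * x j) :
    x ∈ interior {r : Fin ν → ℝ | (∀ i, 0 ≤ Hhat.mulVec r i) ∧
        0 ≤ ∑ j, g₁ j * r j ∧ 0 ≤ ∑ j, g₂ j * r j} := by
  refine mem_interior.2 ⟨{r | ∀ i, Hhat i = 0 ∨ 0 < Hhat.mulVec r i}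
    ∩ ({r | 0 < ∑ j, g₁ j * r j} ∩ {r | 0 < ∑ j, g₂ j * r j}), ?_, ?_, ?_⟩
  · rintro r ⟨hr, hr1, hr2⟩
    refine ⟨fun i => ?_, le_of_lt hr1, le_of_lt hr2⟩
    rcases hr i with hz | hp
    · simp [Matrix.mulVec, dotProduct, hz]
    · exact le_of_lt hp
  · exact (ncb_rows_open Hhat).inter ((isOpen_lt continuous_const (ncb_lin_cont g₁)).inter
      (isOpen_lt continuous_const (ncb_lin_cont g₂)))
  · exact ⟨hH, h1, h2⟩

lemma ncb_sep {ν : ℕ} (h₁ h₂ : Fin ν → ℝ) (h₂ne : h₂ ≠ 0)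
    (hindep : ∀ t : ℝ, h₁ ≠ t • h₂) :
    ∃ w : Fin ν → ℝ, (0 < ∑ j, h₁ j * w j) ∧ (∑ j, h₂ j * w j < 0) := by
  set a : ℝ := ∑ j, h₁ j * h₁ j with ha
  set b : ℝ := ∑ j, h₁ j * h₂ j with hb
  set c : ℝ := ∑ j, h₂ j * h₂ j with hc
  have hcpos : 0 < c := ncb_sumsq_pos h₂ h₂ne
  have hexp : ∑ j, (c * h₁ j - b * h₂ j) * (c * h₁ j - b * h₂ j)
      = c * (c * a - b * b) := by
    have hcong : ∀ j ∈ Finset.univ, (c * h₁ j - b * h₂ j) * (c * h₁ j - b * h₂ j)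
        = c * c * (h₁ j * h₁ j) - 2 * c * b * (h₁ j * h₂ j) + b * b * (h₂ j * h₂ j) :=
      fun j _ => by ring
    rw [Finset.sum_congr rfl hcong, Finset.sum_add_distrib, Finset.sum_sub_distrib,
      ← Finset.mul_sum, ← Finset.mul_sum, ← Finset.mul_sum, ← ha, ← hb, ← hc]
    ring
  have hDnn : 0 ≤ c * a - b * b := by
    have h0 : 0 ≤ ∑ j, (c * h₁ j - b * h₂ j) * (c * h₁ j - b * h₂ j) :=
      Finset.sum_nonneg fun j _ => mul_self_nonneg _
    nlinarith [hexp, hcpos]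
  have hD : 0 < c * a - b * b := by
    rcases lt_or_eq_of_le hDnn with h | h
    · exact h
    · exfalso
      have hz : ∑ j, (c * h₁ j - b * h₂ j) * (c * h₁ j - b * h₂ j) = 0 := by
        rw [hexp, ← h]; ring
      have hall : ∀ j ∈ Finset.univ, (c * h₁ j - b * h₂ j) * (c * h₁ j - b * h₂ j) = 0 :=
        (Finset.sum_eq_zero_iff_of_nonneg fun j _ => mul_self_nonneg _).1 hz
      have heq : h₁ = (b / c) • h₂ := by
        funext j
        have := mul_self_eq_zero.1 (hall j (Finset.mem_univ j))
        have hcj : c * h₁ j = b * h₂ j := by linarith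
        have : h₁ j = (b / c) * h₂ j := by
          field_simp
          linarith
        simpa [Pi.smul_apply] using this
      exact hindep (b / c) heq
  set D : ℝ := c * a - b * b with hDdef
  set ε : ℝ := D / (2 * (|b| + 1)) with hε
  have habs : 0 ≤ |b| := abs_nonneg b
  have hεpos : 0 < ε := div_pos hD (by positivity)
  have hεb : ε * b < D := by
    have h1 : ε * b ≤ ε * |b| := mul_le_mul_of_nonneg_left (le_abs_self b) hεpos.le
    have h2 : ε * (2 * (|b| + 1)) = D := by
      rw [hε]; field_simp
    nlinarith
  refine ⟨fun j => c * h₁ j - (b + ε) * h₂ j, ?_, ?_⟩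
  · have : ∑ j, h₁ j * (c * h₁ j - (b + ε) * h₂ j)
        = c * a - (b + ε) * b := by
      have hcong : ∀ j ∈ Finset.univ, h₁ j * (c * h₁ j - (b + ε) * h₂ j)
          = c * (h₁ j * h₁ j) - (b + ε) * (h₁ j * h₂ j) := fun j _ => by ring
      rw [Finset.sum_congr rfl hcong, Finset.sum_sub_distrib, ← Finset.mul_sum,
        ← Finset.mul_sum, ← ha, ← hb]
    rw [this]; nlinarith
  · have : ∑ j, h₂ j * (c * h₁ j - (b + ε) * h₂ j)
        = c * b - (b + ε) * c := by
      have hcong : ∀ j ∈ Finset.univ, h₂ j * (c * h₁ j - (b + ε) * h₂ j)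
          = c * (h₁ j * h₂ j) - (b + ε) * (h₂ j * h₂ j) := fun j _ => by ring
      rw [Finset.sum_congr rfl hcong, Finset.sum_sub_distrib, ← Finset.mul_sum,
        ← Finset.mul_sum, ← hb, ← hc]
    rw [this]; nlinarith

/-- base case of the neighbor-chain lemma. -/
theorem neighbor_chain_base_case (m ν : ℕ) (Hhat : Matrix (Fin m) (Fin ν) ℝ)
    (h₁ h₂ : Fin ν → ℝ) (h₁ne : h₁ ≠ 0) (h₂ne : h₂ ≠ 0)
    (v : Fin ν → ℝ) (hvpos : ∀ j, 0 < v j) (hvker : Hhat.mulVec v = 0)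
    (hv₁ : ∑ j, h₁ j * v j = 0) (hv₂ : ∑ j, h₂ j * v j = 0)
    (hindep : ∀ t : ℝ, h₁ ≠ t • h₂)
    (hint₁ : (interior {r : Fin ν → ℝ | (∀ i, 0 ≤ Hhat.mulVec r i) ∧
        0 ≤ ∑ j, h₁ j * r j ∧ 0 ≤ ∑ j, h₂ j * r j}).Nonempty)
    (hint₂ : (interior {r : Fin ν → ℝ | (∀ i, 0 ≤ Hhat.mulVec r i) ∧
        0 ≤ -∑ j, h₁ j * r j ∧ 0 ≤ -∑ j, h₂ j * r j}).Nonempty) :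
    (interior {r : Fin ν → ℝ | (∀ i, 0 ≤ Hhat.mulVec r i) ∧
        0 ≤ ∑ j, h₁ j * r j ∧ 0 ≤ -∑ j, h₂ j * r j}).Nonempty ∨
    (interior {r : Fin ν → ℝ | (∀ i, 0 ≤ Hhat.mulVec r i) ∧
        0 ≤ -∑ j, h₁ j * r j ∧ 0 ≤ ∑ j, h₂ j * r j}).Nonempty := by
  obtain ⟨r₁, hr₁⟩ := hint₁
  obtain ⟨r₂, hr₂⟩ := hint₂
  -- set equalities to convert target sets
  have hsetL : {r : Fin ν → ℝ | (∀ i, 0 ≤ Hhat.mulVec r i) ∧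
        0 ≤ ∑ j, h₁ j * r j ∧ 0 ≤ -∑ j, h₂ j * r j}
      = {r : Fin ν → ℝ | (∀ i, 0 ≤ Hhat.mulVec r i) ∧
        0 ≤ ∑ j, h₁ j * r j ∧ 0 ≤ ∑ j, (-h₂) j * r j} := by
    ext r; simp [Pi.neg_apply, neg_mul, Finset.sum_neg_distrib]
  have hsetR : {r : Fin ν → ℝ | (∀ i, 0 ≤ Hhat.mulVec r i) ∧
        0 ≤ -∑ j, h₁ j * r j ∧ 0 ≤ ∑ j, h₂ j * r j}
      = {r : Fin ν → ℝ | (∀ i, 0 ≤ Hhat.mulVec r i) ∧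
        0 ≤ ∑ j, (-h₁) j * r j ∧ 0 ≤ ∑ j, h₂ j * r j} := by
    ext r; simp [Pi.neg_apply, neg_mul, Finset.sum_neg_distrib]
  -- strict inequalities at r₁
  have hr1H : ∀ i, Hhat i ≠ 0 → 0 < Hhat.mulVec r₁ i := by
    intro i hi
    have hx : r₁ ∈ interior {r : Fin ν → ℝ | 0 ≤ ∑ j, Hhat i j * r j} := by
      refine interior_mono ?_ hr₁
      intro r hr
      simpa [Matrix.mulVec, dotProduct] using hr.1 i
    have := ncb_strict_of_interior (Hhat i) r₁ hi hx
    simpa [Matrix.mulVec, dotProduct] using this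
  have hA1 : 0 < ∑ j, h₁ j * r₁ j :=
    ncb_strict_of_interior h₁ r₁ h₁ne (interior_mono (fun r hr => hr.2.1) hr₁)
  have hA2 : 0 < ∑ j, h₂ j * r₁ j :=
    ncb_strict_of_interior h₂ r₁ h₂ne (interior_mono (fun r hr => hr.2.2) hr₁)
  -- strict inequalities at r₂
  have hr2H : ∀ i, Hhat i ≠ 0 → 0 < Hhat.mulVec r₂ i := by
    intro i hi
    have hx : r₂ ∈ interior {r : Fin ν → ℝ | 0 ≤ ∑ j, Hhat i j * r j} := by
      refine interior_mono ?_ hr₂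
      intro r hr
      simpa [Matrix.mulVec, dotProduct] using hr.1 i
    have := ncb_strict_of_interior (Hhat i) r₂ hi hx
    simpa [Matrix.mulVec, dotProduct] using this
  have hB1 : ∑ j, h₁ j * r₂ j < 0 := by
    have hx : r₂ ∈ interior {r : Fin ν → ℝ | 0 ≤ ∑ j, (-h₁) j * r j} := by
      refine interior_mono ?_ hr₂
      intro r hr
      have := hr.2.1
      simpa [Pi.neg_apply, neg_mul, Finset.sum_neg_distrib] using this
    have h' := ncb_strict_of_interior (-h₁) r₂ (neg_ne_zero.2 h₁ne) hx
    have : 0 < -∑ j, h₁ j * r₂ j := by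
      simpa [Pi.neg_apply, neg_mul, Finset.sum_neg_distrib] using h'
    linarith
  have hB2 : ∑ j, h₂ j * r₂ j < 0 := by
    have hx : r₂ ∈ interior {r : Fin ν → ℝ | 0 ≤ ∑ j, (-h₂) j * r j} := by
      refine interior_mono ?_ hr₂
      intro r hr
      have := hr.2.2
      simpa [Pi.neg_apply, neg_mul, Finset.sum_neg_distrib] using this
    have h' := ncb_strict_of_interior (-h₂) r₂ (neg_ne_zero.2 h₂ne) hx
    have : 0 < -∑ j, h₂ j * r₂ j := by
      simpa [Pi.neg_apply, neg_mul, Finset.sum_neg_distrib] using h'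
    linarith
  set A₁ : ℝ := ∑ j, h₁ j * r₁ j with hA1d
  set A₂ : ℝ := ∑ j, h₂ j * r₁ j with hA2d
  set B₁ : ℝ := ∑ j, h₁ j * r₂ j with hB1d
  set B₂ : ℝ := ∑ j, h₂ j * r₂ j with hB2d
  have hd₁ : 0 < A₁ - B₁ := by linarith
  have hd₂ : 0 < A₂ - B₂ := by linarith
  set t₁ : ℝ := A₁ / (A₁ - B₁) with ht₁d
  set t₂ : ℝ := A₂ / (A₂ - B₂) with ht₂d
  have ht₁eq : t₁ * (A₁ - B₁) = A₁ := div_mul_cancel₀ _ (ne_of_gt hd₁)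
  have ht₂eq : t₂ * (A₂ - B₂) = A₂ := div_mul_cancel₀ _ (ne_of_gt hd₂)
  have ht₁0 : 0 < t₁ := div_pos hA1 hd₁
  have ht₂0 : 0 < t₂ := div_pos hA2 hd₂
  have ht₁1 : t₁ < 1 := by
    rw [ht₁d, div_lt_one hd₁]; linarith
  have ht₂1 : t₂ < 1 := by
    rw [ht₂d, div_lt_one hd₂]; linarith
  -- segment point
  have hsegH : ∀ t : ℝ, 0 < t → t < 1 → ∀ i, Hhat i = 0 ∨
      0 < Hhat.mulVec (fun j => (1 - t) * r₁ j + t * r₂ j) i := by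
    intro t ht0 ht1 i
    by_cases hi : Hhat i = 0
    · exact Or.inl hi
    · right
      have hcomp : Hhat.mulVec (fun j => (1 - t) * r₁ j + t * r₂ j) i
          = (1 - t) * Hhat.mulVec r₁ i + t * Hhat.mulVec r₂ i := by
        simp only [Matrix.mulVec, dotProduct]
        exact ncb_sum_comb (Hhat i) r₁ r₂ (1 - t) t
      rw [hcomp]
      have := hr1H i hi
      have := hr2H i hi
      nlinarith
  rcases lt_trichotomy t₁ t₂ with hlt | heqt | hgt
  · -- t₁ < t₂ : right disjunct, h₁ negative, h₂ positive
    right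
    set t : ℝ := (t₁ + t₂) / 2 with htd
    have ht0 : 0 < t := by rw [htd]; linarith
    have ht1 : t < 1 := by rw [htd]; linarith
    have htgt : t₁ < t := by rw [htd]; linarith
    have htlt : t < t₂ := by rw [htd]; linarith
    set r : Fin ν → ℝ := fun j => (1 - t) * r₁ j + t * r₂ j with hrd
    have hs1 : ∑ j, h₁ j * r j = (1 - t) * A₁ + t * B₁ := ncb_sum_comb h₁ r₁ r₂ (1 - t) t
    have hs2 : ∑ j, h₂ j * r j = (1 - t) * A₂ + t * B₂ := ncb_sum_comb h₂ r₁ r₂ (1 - t) t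
    have hneg : ∑ j, h₁ j * r j < 0 := by
      rw [hs1]
      nlinarith [mul_pos (sub_pos.2 htgt) hd₁, ht₁eq]
    have hpos : 0 < ∑ j, h₂ j * r j := by
      rw [hs2]
      nlinarith [mul_pos (sub_pos.2 htlt) hd₂, ht₂eq]
    rw [hsetR]
    refine ⟨r, ncb_mem_interior Hhat (-h₁) h₂ r (hsegH t ht0 ht1) ?_ hpos⟩
    have : 0 < -∑ j, h₁ j * r j := by linarith
    simpa [Pi.neg_apply, neg_mul, Finset.sum_neg_distrib] using this
  · -- t₁ = t₂ : perturbation case, left disjunct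
    left
    set rstar : Fin ν → ℝ := fun j => (1 - t₁) * r₁ j + t₁ * r₂ j with hrsd
    have hs1 : ∑ j, h₁ j * rstar j = 0 := by
      rw [ncb_sum_comb h₁ r₁ r₂ (1 - t₁) t₁]; linarith [ht₁eq]
    have hs2 : ∑ j, h₂ j * rstar j = 0 := by
      rw [ncb_sum_comb h₂ r₁ r₂ (1 - t₁) t₁]
      have h := congrArg (· * (A₂ - B₂)) heqt
      linarith [ht₂eq]
    have hUstar : rstar ∈ {r : Fin ν → ℝ | ∀ i, Hhat i = 0 ∨ 0 < Hhat.mulVec r i} :=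
      hsegH t₁ ht₁0 ht₁1
    obtain ⟨δ, hδ, hball⟩ := Metric.isOpen_iff.1 (ncb_rows_open Hhat) rstar hUstar
    obtain ⟨w, hw1, hw2⟩ := ncb_sep h₁ h₂ h₂ne hindep
    have hwn : (0:ℝ) ≤ ‖w‖ := norm_nonneg w
    set ε' : ℝ := δ / (2 * (‖w‖ + 1)) with hε'd
    have hε'pos : 0 < ε' := div_pos hδ (by positivity)
    obtain ⟨r, hrd⟩ : ∃ r : Fin ν → ℝ, r = rstar + ε' • w := ⟨_, rfl⟩
    have hrball : r ∈ Metric.ball rstar δ := by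
      rw [Metric.mem_ball, dist_eq_norm, hrd, add_sub_cancel_left, norm_smul,
        Real.norm_eq_abs, abs_of_pos hε'pos]
      have h2 : ε' * (2 * (‖w‖ + 1)) = δ := by rw [hε'd]; field_simp
      nlinarith
    have hrU : ∀ i, Hhat i = 0 ∨ 0 < Hhat.mulVec r i := hball hrball
    have hrj : ∀ j, r j = 1 * rstar j + ε' * w j := fun j => by
      simp [hrd, Pi.add_apply, Pi.smul_apply]
    have hc1 : ∑ j, h₁ j * r j = 1 * ∑ j, h₁ j * rstar j + ε' * ∑ j, h₁ j * w j := by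
      rw [Finset.sum_congr rfl fun j _ => by rw [hrj j]]
      exact ncb_sum_comb h₁ rstar w 1 ε'
    have hc2 : ∑ j, h₂ j * r j = 1 * ∑ j, h₂ j * rstar j + ε' * ∑ j, h₂ j * w j := by
      rw [Finset.sum_congr rfl fun j _ => by rw [hrj j]]
      exact ncb_sum_comb h₂ rstar w 1 ε'
    have hpos1 : 0 < ∑ j, h₁ j * r j := by
      rw [hc1, hs1]; nlinarith
    have hneg2 : ∑ j, h₂ j * r j < 0 := by
      rw [hc2, hs2]; nlinarith
    rw [hsetL]
    refine ⟨r, ncb_mem_interior Hhat h₁ (-h₂) r hrU hpos1 ?_⟩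
    have : 0 < -∑ j, h₂ j * r j := by linarith
    simpa [Pi.neg_apply, neg_mul, Finset.sum_neg_distrib] using this
  · -- t₂ < t₁ : left disjunct, h₁ positive, h₂ negative
    left
    set t : ℝ := (t₁ + t₂) / 2 with htd
    have ht0 : 0 < t := by rw [htd]; linarith
    have ht1 : t < 1 := by rw [htd]; linarith
    have htlt : t < t₁ := by rw [htd]; linarith
    have htgt : t₂ < t := by rw [htd]; linarith
    set r : Fin ν → ℝ := fun j => (1 - t) * r₁ j + t * r₂ j with hrd
    have hs1 : ∑ j, h₁ j * r j = (1 - t) * A₁ + t * B₁ := ncb_sum_comb h₁ r₁ r₂ (1 - t) t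
    have hs2 : ∑ j, h₂ j * r j = (1 - t) * A₂ + t * B₂ := ncb_sum_comb h₂ r₁ r₂ (1 - t) t
    have hpos : 0 < ∑ j, h₁ j * r j := by
      rw [hs1]
      nlinarith [mul_pos (sub_pos.2 htlt) hd₁, ht₁eq]
    have hneg : ∑ j, h₂ j * r j < 0 := by
      rw [hs2]
      nlinarith [mul_pos (sub_pos.2 htgt) hd₂, ht₂eq]
    rw [hsetL]
    refine ⟨r, ncb_mem_interior Hhat h₁ (-h₂) r (hsegH t ht0 ht1) hpos ?_⟩
    have : 0 < -∑ j, h₂ j * r j := by linarith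
    simpa [Pi.neg_apply, neg_mul, Finset.sum_neg_distrib] using this
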